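/- Suppose the n×p matrix X satisfies RE(s,1,X) with constant K = K(s,1,X) > 0, Y = Xβ + ε with |supp(β)| ≤ s, ‖X_j‖₂ ≤ (1+θ)√n, and β̂ solves the Dantzig selector with parameter λ_n ≥ ‖X^Tε/n‖_∞. Then υ = β̂ − β satisfies: ‖υ_S‖₂ ≤ 4K²λ_n√s, ‖υ‖₁ ≤ 8K²λ_n s, and ‖υ‖₂ ≤ 12K²λ_n√s. -/
import Mathlib


open Finset

noncomputable def l1 {p : ℕ} (v : Fin p → ℝ) : ℝ := ∑ i, |v i|
noncomputable def l2 {n : ℕ} (v : Fin n → ℝ) : ℝ := Real.sqrt (∑ i, (v i) ^ 2)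

def restr {p : ℕ} (T : Finset (Fin p)) (v : Fin p → ℝ) : Fin p → ℝ :=
  fun i => if i ∈ T then v i else 0

lemma l1_nonneg {p : ℕ} (v : Fin p → ℝ) : 0 ≤ l1 v :=
  Finset.sum_nonneg fun _ _ => abs_nonneg _

lemma l2_nonneg {n : ℕ} (v : Fin n → ℝ) : 0 ≤ l2 v := Real.sqrt_nonneg _

lemma l2_sq {n : ℕ} (v : Fin n → ℝ) : l2 v ^ 2 = ∑ i, (v i) ^ 2 :=
  Real.sq_sqrt (Finset.sum_nonneg fun _ _ => sq_nonneg _)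

lemma l1_restr {p : ℕ} (T : Finset (Fin p)) (v : Fin p → ℝ) :
    l1 (restr T v) = ∑ i ∈ T, |v i| := by
  unfold l1 restr
  rw [show (∑ i, |if i ∈ T then v i else 0|) = ∑ i, if i ∈ T then |v i| else 0 by
    apply Finset.sum_congr rfl; intro i _; split <;> simp]
  rw [Finset.sum_ite_mem, Finset.univ_inter]

lemma l2_restr_sq {p : ℕ} (T : Finset (Fin p)) (v : Fin p → ℝ) :
    l2 (restr T v) ^ 2 = ∑ i ∈ T, (v i) ^ 2 := by
  rw [l2_sq]
  unfold restr
  rw [show (∑ i, (if i ∈ T then v i else 0) ^ 2) = ∑ i, if i ∈ T then (v i) ^ 2 else 0 by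
    apply Finset.sum_congr rfl; intro i _; split <;> simp]
  rw [Finset.sum_ite_mem, Finset.univ_inter]

lemma l1_split {p : ℕ} (T : Finset (Fin p)) (v : Fin p → ℝ) :
    l1 v = l1 (restr T v) + l1 (restr Tᶜ v) := by
  rw [l1_restr, l1_restr]
  exact (Finset.sum_add_sum_compl T _).symm

lemma l2_sq_split {p : ℕ} (T : Finset (Fin p)) (v : Fin p → ℝ) :
    l2 v ^ 2 = l2 (restr T v) ^ 2 + l2 (restr Tᶜ v) ^ 2 := by
  rw [l2_sq, l2_restr_sq, l2_restr_sq]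
  exact (Finset.sum_add_sum_compl T _).symm

/-- Cauchy–Schwarz: `‖v_T‖₁ ≤ √|T| ‖v_T‖₂`. -/
lemma l1_restr_le {p : ℕ} (T : Finset (Fin p)) (v : Fin p → ℝ) :
    l1 (restr T v) ≤ Real.sqrt T.card * l2 (restr T v) := by
  have hCS := Finset.sum_mul_sq_le_sq_mul_sq T (fun _ => (1:ℝ)) (fun i => |v i|)
  simp only [one_mul, one_pow] at hCS
  have h1 : (∑ _i ∈ T, (1:ℝ)) = T.card := by simp
  rw [h1] at hCS
  rw [l1_restr]
  calc (∑ i ∈ T, |v i|) = Real.sqrt ((∑ i ∈ T, |v i|) ^ 2) :=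
        (Real.sqrt_sq (Finset.sum_nonneg fun _ _ => abs_nonneg _)).symm
    _ ≤ Real.sqrt ((T.card : ℝ) * ∑ i ∈ T, |v i| ^ 2) := Real.sqrt_le_sqrt hCS
    _ = Real.sqrt T.card * Real.sqrt (∑ i ∈ T, |v i| ^ 2) := Real.sqrt_mul (by positivity) _
    _ = Real.sqrt T.card * l2 (restr T v) := by
        congr 1
        rw [show l2 (restr T v) = Real.sqrt (∑ i ∈ T, (v i)^2) by
          rw [← l2_restr_sq, Real.sqrt_sq (l2_nonneg _)]]
        congr 1
        exact Finset.sum_congr rfl fun i _ => sq_abs _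

lemma l1_eq_zero {p : ℕ} {v : Fin p → ℝ} (h : l1 v ≤ 0) : v = 0 := by
  funext i
  have := Finset.sum_nonneg (s := (Finset.univ : Finset (Fin p)))
    (f := fun i => |v i|) (fun _ _ => abs_nonneg _)
  have h0 : l1 v = 0 := le_antisymm h this
  have := (Finset.sum_eq_zero_iff_of_nonneg (fun i _ => abs_nonneg (v i))).1 h0 i (by simp)
  simpa [abs_eq_zero] using this

/-- Existence of a "top s" set for a function g. -/
lemma exists_top (p s : ℕ) (hsp : s ≤ p) (g : Fin p → ℝ) :
    ∃ T : Finset (Fin p), T.card = s ∧ ∀ i ∉ T, ∀ j ∈ T, g i ≤ g j := by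
  induction s with
  | zero => exact ⟨∅, Finset.card_empty, fun i _ j hj => absurd hj (Finset.notMem_empty j)⟩
  | succ s ih =>
    obtain ⟨T, hTc, hTtop⟩ := ih (Nat.le_of_succ_le hsp)
    have hne : (Tᶜ : Finset (Fin p)).Nonempty := by
      rw [← Finset.card_pos, Finset.card_compl, hTc, Fintype.card_fin]
      omega
    obtain ⟨b, hb, hbmax⟩ := Finset.exists_max_image (Tᶜ) g hne
    have hbT : b ∉ T := by simpa using hb
    refine ⟨insert b T, by rw [Finset.card_insert_of_notMem hbT, hTc], ?_⟩
    intro i hi j hj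
    have hiT : i ∉ T := fun h => hi (Finset.mem_insert_of_mem h)
    have hib : i ≠ b := fun h => hi (h ▸ Finset.mem_insert_self b T)
    rcases Finset.mem_insert.1 hj with rfl | hjT
    · exact hbmax i (Finset.mem_compl.2 hiT)
    · exact hTtop i hiT j hjT

/-- If `T` is a top set of size `s` for `|v|`, any set of card at most `s` has smaller ℓ¹ mass. -/
lemma sum_abs_le_top {p s : ℕ} (hs : 1 ≤ s) {v : Fin p → ℝ} {T : Finset (Fin p)}
    (hTc : T.card = s) (hTtop : ∀ i ∉ T, ∀ j ∈ T, |v i| ≤ |v j|)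
    {T' : Finset (Fin p)} (hT' : T'.card ≤ s) :
    ∑ i ∈ T', |v i| ≤ ∑ i ∈ T, |v i| := by
  classical
  have hTne : T.Nonempty := Finset.card_pos.1 (by omega)
  set m := T.inf' hTne (fun i => |v i|) with hm
  have hm0 : 0 ≤ m := Finset.le_inf' hTne _ fun b _ => abs_nonneg _
  have hout : ∀ i ∉ T, |v i| ≤ m := fun i hi =>
    Finset.le_inf' hTne _ fun b hb => hTtop i hi b hb
  have hcard : (T' \ T).card ≤ (T \ T').card := by
    have h1 := Finset.card_sdiff_add_card_inter T' T
    have h2 := Finset.card_sdiff_add_card_inter T T'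
    rw [Finset.inter_comm] at h2
    omega
  have key : ∑ i ∈ T' \ T, |v i| ≤ ∑ i ∈ T \ T', |v i| := by
    calc ∑ i ∈ T' \ T, |v i| ≤ (T' \ T).card • m :=
          Finset.sum_le_card_nsmul _ _ _ fun x hx => hout x (Finset.mem_sdiff.1 hx).2
      _ ≤ (T \ T').card • m := by
          rw [nsmul_eq_mul, nsmul_eq_mul]
          exact mul_le_mul_of_nonneg_right (by exact_mod_cast hcard) hm0
      _ ≤ ∑ i ∈ T \ T', |v i| :=
          Finset.card_nsmul_le_sum _ _ _ fun x hx =>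
            Finset.inf'_le _ (Finset.mem_sdiff.1 hx).1
  have hsplit : ∀ (A B : Finset (Fin p)),
      ∑ i ∈ A \ B, |v i| + ∑ i ∈ A ∩ B, |v i| = ∑ i ∈ A, |v i| := fun A B => by
    rw [← Finset.sum_union (Finset.disjoint_sdiff_inter A B), Finset.sdiff_union_inter]
  calc ∑ i ∈ T', |v i| = ∑ i ∈ T' \ T, |v i| + ∑ i ∈ T' ∩ T, |v i| := (hsplit T' T).symm
    _ ≤ ∑ i ∈ T \ T', |v i| + ∑ i ∈ T ∩ T', |v i| := by
        rw [Finset.inter_comm]; exact add_le_add key le_rfl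
    _ = ∑ i ∈ T, |v i| := hsplit T T' 

lemma le_of_sq_le_sq' {a b : ℝ} (ha : 0 ≤ a) (hb : 0 ≤ b) (h : a ^ 2 ≤ b ^ 2) : a ≤ b := by
  calc a = Real.sqrt (a ^ 2) := (Real.sqrt_sq ha).symm
    _ ≤ Real.sqrt (b ^ 2) := Real.sqrt_le_sqrt h
    _ = b := Real.sqrt_sq hb

set_option maxHeartbeats 1000000 in
/-- ℓ₂ and ℓ₁ bounds for the Dantzig selector under RE(s,1,X):
‖υ_S‖₂ ≤ 4K²λ√s, ‖υ‖₁ ≤ 8K²λs, ‖υ‖₂ ≤ 12K²λ√s. -/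
theorem stmt17 (n p s : ℕ) (hn : 1 ≤ n) (hs : 1 ≤ s) (hsp : 2 * s ≤ p)
    (X : Matrix (Fin n) (Fin p) ℝ) (β βhat : Fin p → ℝ) (ε : Fin n → ℝ)
    (Y : Fin n → ℝ) (lam θ K : ℝ) (hlam : 0 < lam) (hθ0 : 0 < θ) (hθ1 : θ < 1)
    (hK : 0 < K)
    (hY : Y = X.mulVec β + ε)
    (S : Finset (Fin p)) (hS : S = Finset.univ.filter fun j => β j ≠ 0)
    (hScard : S.card ≤ s)
    -- RE(s,1,X) with constant K = K(s,1,X)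
    (hRE : ∀ J0 : Finset (Fin p), J0.card ≤ s → ∀ v : Fin p → ℝ, v ≠ 0 →
      l1 (restr J0ᶜ v) ≤ 1 * l1 (restr J0 v) →
      Real.sqrt n * l2 (restr J0 v) ≤ K * l2 (X.mulVec v))
    -- column normalization
    (hcol : ∀ j, l2 (fun i => X i j) ≤ (1 + θ) * Real.sqrt n)
    -- λ ≥ ‖X^T ε / n‖_∞
    (hnoise : ∀ j, |(∑ i, X i j * ε i) / n| ≤ lam)
    -- β̂ is feasible for the Dantzig selector
    (hfeas : ∀ j, |(∑ i, X i j * (Y - X.mulVec βhat) i) / n| ≤ lam)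
    -- β̂ is optimal among feasible points
    (hopt : ∀ b : Fin p → ℝ,
      (∀ j, |(∑ i, X i j * (Y - X.mulVec b) i) / n| ≤ lam) → l1 βhat ≤ l1 b) :
    l2 (restr S (βhat - β)) ≤ 4 * K ^ 2 * lam * Real.sqrt s ∧
      l1 (βhat - β) ≤ 8 * K ^ 2 * lam * s ∧
      l2 (βhat - β) ≤ 12 * K ^ 2 * lam * Real.sqrt s := by
  classical
  set υ : Fin p → ℝ := βhat - β with hυ
  by_cases hv0 : υ = 0
  · rw [hv0]
    have hr : ∀ T : Finset (Fin p), restr T (0 : Fin p → ℝ) = 0 := fun T => by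
      funext i; simp [restr]
    have hl10 : l1 (0 : Fin p → ℝ) = 0 := by simp [l1]
    have hl20 : l2 (0 : Fin p → ℝ) = 0 := by simp [l2]
    refine ⟨?_, ?_, ?_⟩
    · rw [hr, hl20]; positivity
    · rw [hl10]; positivity
    · rw [hl20]; positivity
  have hn0 : (0:ℝ) < n := by exact_mod_cast hn
  have hs0 : (0:ℝ) < s := by exact_mod_cast hs
  have hss : Real.sqrt s * Real.sqrt s = (s:ℝ) := Real.mul_self_sqrt hs0.le
  have hsqs : (0:ℝ) ≤ Real.sqrt s := Real.sqrt_nonneg _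
  -- β is feasible
  have hεY : Y - X.mulVec β = ε := by rw [hY]; ring
  have hfeasβ : ∀ j, |(∑ i, X i j * (Y - X.mulVec β) i) / n| ≤ lam := by
    intro j; rw [hεY]; exact hnoise j
  have hl1opt : l1 βhat ≤ l1 β := hopt β hfeasβ
  -- β vanishes off S
  have hβS : ∀ j ∉ S, β j = 0 := by
    intro j hj
    by_contra h
    exact hj (hS ▸ Finset.mem_filter.2 ⟨Finset.mem_univ j, h⟩)
  -- cone condition at S
  have hcone : l1 (restr Sᶜ υ) ≤ l1 (restr S υ) := by
    have h1 : l1 βhat = ∑ j ∈ S, |βhat j| + ∑ j ∈ Sᶜ, |υ j| := by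
      rw [l1, ← Finset.sum_add_sum_compl S]
      congr 1
      refine Finset.sum_congr rfl fun j hj => ?_
      have hb0 : β j = 0 := hβS j (by simpa using hj)
      simp [hυ, Pi.sub_apply, hb0]
    have h2 : l1 β = ∑ j ∈ S, |β j| := by
      have hz : ∑ j ∈ Sᶜ, |β j| = 0 :=
        Finset.sum_eq_zero fun j hj => by rw [hβS j (by simpa using hj), abs_zero]
      rw [l1, ← Finset.sum_add_sum_compl S, hz, add_zero]
    have h3 : ∀ j ∈ S, |β j| - |υ j| ≤ |βhat j| := by
      intro j _
      have he : β j = βhat j - υ j := by simp [hυ]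
      have h4 : |βhat j - υ j| ≤ |βhat j| + |υ j| := abs_sub _ _
      rw [he]
      linarith
    have h5 : ∑ j ∈ S, (|β j| - |υ j|) ≤ ∑ j ∈ S, |βhat j| := Finset.sum_le_sum h3
    rw [Finset.sum_sub_distrib] at h5
    rw [l1_restr, l1_restr]
    rw [h1, h2] at hl1opt
    linarith
  -- bound on X^T X υ
  have hXυlin : ∀ i, (X.mulVec υ) i = (Y - X.mulVec β) i - (Y - X.mulVec βhat) i := by
    intro i
    rw [hυ, Matrix.mulVec_sub]
    simp [Pi.sub_apply]
    try ring
  have habs : ∀ a : ℝ, |a / n| ≤ lam → |a| ≤ lam * n := by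
    intro a h
    rw [abs_div, abs_of_pos hn0, div_le_iff₀ hn0] at h
    exact h
  have hXtX : ∀ j, |∑ i, X i j * (X.mulVec υ) i| ≤ 2 * lam * n := by
    intro j
    have he : ∑ i, X i j * (X.mulVec υ) i
        = (∑ i, X i j * (Y - X.mulVec β) i) - ∑ i, X i j * (Y - X.mulVec βhat) i := by
      rw [← Finset.sum_sub_distrib]
      refine Finset.sum_congr rfl fun i _ => ?_
      rw [hXυlin i]; ring
    rw [he]
    have h1 := habs _ (hfeasβ j)
    have h2 := habs _ (hfeas j)
    calc |(∑ i, X i j * (Y - X.mulVec β) i) - ∑ i, X i j * (Y - X.mulVec βhat) i|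
        ≤ |∑ i, X i j * (Y - X.mulVec β) i| + |∑ i, X i j * (Y - X.mulVec βhat) i| :=
          abs_sub _ _
      _ ≤ 2 * lam * n := by linarith
  -- quadratic form bound
  have hXυ2 : l2 (X.mulVec υ) ^ 2 ≤ 2 * lam * n * l1 υ := by
    rw [l2_sq]
    have hswap : ∑ i, (X.mulVec υ i) ^ 2 = ∑ j, υ j * ∑ i, X i j * (X.mulVec υ) i := by
      calc ∑ i, (X.mulVec υ i) ^ 2 = ∑ i, ∑ j, υ j * (X i j * (X.mulVec υ) i) := by
            refine Finset.sum_congr rfl fun i _ => ?_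
            rw [sq]
            nth_rewrite 1 [Matrix.mulVec, dotProduct]
            rw [Finset.sum_mul]
            exact Finset.sum_congr rfl fun j _ => by ring
        _ = ∑ j, υ j * ∑ i, X i j * (X.mulVec υ) i := by
            rw [Finset.sum_comm]
            exact Finset.sum_congr rfl fun j _ => (Finset.mul_sum _ _ _).symm
    rw [hswap]
    calc ∑ j, υ j * ∑ i, X i j * X.mulVec υ i ≤ ∑ j, |υ j| * (2 * lam * n) := by
          refine Finset.sum_le_sum fun j _ => ?_
          calc υ j * ∑ i, X i j * X.mulVec υ i
              ≤ |υ j * ∑ i, X i j * X.mulVec υ i| := le_abs_self _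
            _ = |υ j| * |∑ i, X i j * X.mulVec υ i| := abs_mul _ _
            _ ≤ |υ j| * (2 * lam * n) :=
                mul_le_mul_of_nonneg_left (hXtX j) (abs_nonneg _)
      _ = 2 * lam * n * l1 υ := by rw [← Finset.sum_mul, l1]; ring
  -- Cauchy–Schwarz on S and the cone
  set A := l2 (restr S υ) with hA
  have hA0 : 0 ≤ A := l2_nonneg _
  have hl1S : l1 (restr S υ) ≤ Real.sqrt s * A := by
    calc l1 (restr S υ) ≤ Real.sqrt S.card * A := l1_restr_le S υ
      _ ≤ Real.sqrt s * A :=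
        mul_le_mul_of_nonneg_right (Real.sqrt_le_sqrt (by exact_mod_cast hScard)) hA0
  have hl1υ : l1 υ ≤ 2 * l1 (restr S υ) := by
    have := l1_split S υ
    linarith
  have hXυ2' : l2 (X.mulVec υ) ^ 2 ≤ 4 * lam * n * (Real.sqrt s * A) := by
    have h1 : l1 υ ≤ 2 * (Real.sqrt s * A) := by linarith
    calc l2 (X.mulVec υ) ^ 2 ≤ 2 * lam * n * l1 υ := hXυ2
      _ ≤ 2 * lam * n * (2 * (Real.sqrt s * A)) :=
          mul_le_mul_of_nonneg_left h1 (by positivity)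
      _ = 4 * lam * n * (Real.sqrt s * A) := by ring
  -- RE at S
  have hRES := hRE S hScard υ hv0 (by rw [one_mul]; exact hcone)
  have hXυnn : 0 ≤ l2 (X.mulVec υ) := l2_nonneg _
  have hsqn : 0 < Real.sqrt n := Real.sqrt_pos.2 hn0
  have hnA : (n : ℝ) * A ^ 2 ≤ K ^ 2 * l2 (X.mulVec υ) ^ 2 := by
    have h1 : (Real.sqrt n * A) ^ 2 ≤ (K * l2 (X.mulVec υ)) ^ 2 :=
      pow_le_pow_left₀ (by positivity) hRES 2
    calc (n : ℝ) * A ^ 2 = (Real.sqrt n * A) ^ 2 := by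
          rw [mul_pow, Real.sq_sqrt hn0.le]
      _ ≤ (K * l2 (X.mulVec υ)) ^ 2 := h1
      _ = K ^ 2 * l2 (X.mulVec υ) ^ 2 := by ring
  -- A > 0
  have hApos : 0 < A := by
    rcases lt_or_eq_of_le hA0 with h | h
    · exact h
    have hz : l1 υ ≤ 0 := by
      have h7 := hl1S
      rw [← h, mul_zero] at h7
      linarith
    exact absurd (l1_eq_zero hz) hv0
  -- Goal 1
  have hgoal1 : A ≤ 4 * K ^ 2 * lam * Real.sqrt s := by
    have h2 : (n : ℝ) * A ^ 2 ≤ K ^ 2 * (4 * lam * n * (Real.sqrt s * A)) := by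
      calc (n : ℝ) * A ^ 2 ≤ K ^ 2 * l2 (X.mulVec υ) ^ 2 := hnA
        _ ≤ K ^ 2 * (4 * lam * n * (Real.sqrt s * A)) :=
            mul_le_mul_of_nonneg_left hXυ2' (by positivity)
    have h3 : (n : ℝ) * A * A ≤ (n : ℝ) * A * (4 * K ^ 2 * lam * Real.sqrt s) := by
      calc (n : ℝ) * A * A = (n : ℝ) * A ^ 2 := by ring
        _ ≤ K ^ 2 * (4 * lam * n * (Real.sqrt s * A)) := h2
        _ = (n : ℝ) * A * (4 * K ^ 2 * lam * Real.sqrt s) := by ring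
    exact le_of_mul_le_mul_left h3 (by positivity)
  -- Goal 2
  have hgoal2 : l1 υ ≤ 8 * K ^ 2 * lam * s := by
    calc l1 υ ≤ 2 * l1 (restr S υ) := hl1υ
      _ ≤ 2 * (Real.sqrt s * A) := by linarith
      _ ≤ 2 * (Real.sqrt s * (4 * K ^ 2 * lam * Real.sqrt s)) := by
          have := mul_le_mul_of_nonneg_left hgoal1 hsqs
          linarith
      _ = 8 * K ^ 2 * lam * (Real.sqrt s * Real.sqrt s) := by ring
      _ = 8 * K ^ 2 * lam * s := by rw [hss]
  -- Goal 3: top-s set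
  obtain ⟨T, hTc, hTtop⟩ := exists_top p s (by omega) (fun i => |υ i|)
  have hS_le_T : l1 (restr S υ) ≤ l1 (restr T υ) := by
    rw [l1_restr, l1_restr]
    exact sum_abs_le_top hs hTc hTtop hScard
  have hconeT : l1 (restr Tᶜ υ) ≤ 1 * l1 (restr T υ) := by
    rw [one_mul]
    have h1 := l1_split T υ
    linarith
  have hRET := hRE T (le_of_eq hTc) υ hv0 hconeT
  set B := l2 (restr T υ) with hB
  have hB0 : 0 ≤ B := l2_nonneg _
  -- bound on l2 (Xυ)
  have hXub : l2 (X.mulVec υ) ≤ 4 * K * lam * Real.sqrt n * Real.sqrt s := by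
    refine le_of_sq_le_sq' hXυnn (by positivity) ?_
    have h1 : l2 (X.mulVec υ) ^ 2 ≤ 4 * lam * n * (Real.sqrt s * (4 * K ^ 2 * lam * Real.sqrt s)) := by
      calc l2 (X.mulVec υ) ^ 2 ≤ 4 * lam * n * (Real.sqrt s * A) := hXυ2'
        _ ≤ _ := by
            have h4 : Real.sqrt s * A ≤ Real.sqrt s * (4 * K ^ 2 * lam * Real.sqrt s) :=
              mul_le_mul_of_nonneg_left hgoal1 hsqs
            exact mul_le_mul_of_nonneg_left h4 (by positivity)
    have h5 : Real.sqrt n ^ 2 = (n : ℝ) := Real.sq_sqrt hn0.le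
    have h6 : Real.sqrt s ^ 2 = (s : ℝ) := Real.sq_sqrt hs0.le
    calc l2 (X.mulVec υ) ^ 2
        ≤ 4 * lam * n * (Real.sqrt s * (4 * K ^ 2 * lam * Real.sqrt s)) := h1
      _ = 16 * K ^ 2 * lam ^ 2 * n * (Real.sqrt s * Real.sqrt s) := by ring
      _ = 16 * K ^ 2 * lam ^ 2 * n * s := by rw [hss]
      _ = (4 * K * lam * Real.sqrt n * Real.sqrt s) ^ 2 := by
          rw [show (4 * K * lam * Real.sqrt n * Real.sqrt s) ^ 2
            = 16 * K ^ 2 * lam ^ 2 * Real.sqrt n ^ 2 * Real.sqrt s ^ 2 by ring, h5, h6]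
  have hBbound : B ≤ 4 * K ^ 2 * lam * Real.sqrt s := by
    have h1 : Real.sqrt n * B ≤ Real.sqrt n * (4 * K ^ 2 * lam * Real.sqrt s) := by
      calc Real.sqrt n * B ≤ K * l2 (X.mulVec υ) := hRET
        _ ≤ K * (4 * K * lam * Real.sqrt n * Real.sqrt s) :=
            mul_le_mul_of_nonneg_left hXub hK.le
        _ = Real.sqrt n * (4 * K ^ 2 * lam * Real.sqrt s) := by ring
    exact le_of_mul_le_mul_left h1 hsqn
  -- tail bound
  have hTne : T.Nonempty := Finset.card_pos.1 (by omega)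
  set m := T.inf' hTne (fun i => |υ i|) with hm
  have hm0 : 0 ≤ m := Finset.le_inf' hTne _ fun b _ => abs_nonneg _
  have hsm : (s : ℝ) * m ≤ l1 (restr T υ) := by
    rw [l1_restr]
    have := Finset.card_nsmul_le_sum T (fun i => |υ i|) m (fun x hx => Finset.inf'_le _ hx)
    rwa [hTc, nsmul_eq_mul] at this
  have hCS_T : l1 (restr T υ) ≤ Real.sqrt s * B := by
    have := l1_restr_le T υ
    rwa [hTc] at this
  have hl1T0 : 0 ≤ l1 (restr T υ) := l1_nonneg _
  have hl1Tc0 : 0 ≤ l1 (restr Tᶜ υ) := l1_nonneg _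
  have htail_sq : l2 (restr Tᶜ υ) ^ 2 ≤ B ^ 2 := by
    have h2 : ∑ i ∈ Tᶜ, (υ i) ^ 2 ≤ ∑ i ∈ Tᶜ, |υ i| * m := by
      refine Finset.sum_le_sum fun i hi => ?_
      have hout : |υ i| ≤ m :=
        Finset.le_inf' hTne _ fun b hb => hTtop i (by simpa using hi) b hb
      calc (υ i) ^ 2 = |υ i| * |υ i| := by rw [← sq_abs, sq]
        _ ≤ |υ i| * m := mul_le_mul_of_nonneg_left hout (abs_nonneg _)
    have h3 : (∑ i ∈ Tᶜ, |υ i| * m) = l1 (restr Tᶜ υ) * m := by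
      rw [l1_restr, Finset.sum_mul]
    have h4 : l2 (restr Tᶜ υ) ^ 2 ≤ l1 (restr T υ) * m := by
      rw [l2_restr_sq]
      calc ∑ i ∈ Tᶜ, (υ i) ^ 2 ≤ ∑ i ∈ Tᶜ, |υ i| * m := h2
        _ = l1 (restr Tᶜ υ) * m := h3
        _ ≤ l1 (restr T υ) * m := by
            have := hconeT; rw [one_mul] at this
            exact mul_le_mul_of_nonneg_right this hm0
    -- s * (l1T * m) ≤ l1T * l1T ≤ s * B²
    have h5 : (s : ℝ) * (l1 (restr T υ) * m) ≤ (s : ℝ) * B ^ 2 := by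
      calc (s : ℝ) * (l1 (restr T υ) * m) = l1 (restr T υ) * ((s : ℝ) * m) := by ring
        _ ≤ l1 (restr T υ) * l1 (restr T υ) := mul_le_mul_of_nonneg_left hsm hl1T0
        _ ≤ (Real.sqrt s * B) * (Real.sqrt s * B) :=
            mul_le_mul hCS_T hCS_T hl1T0 (by positivity)
        _ = (s : ℝ) * B ^ 2 := by
            rw [show (Real.sqrt ↑s * B) * (Real.sqrt ↑s * B)
              = (Real.sqrt ↑s * Real.sqrt ↑s) * B ^ 2 by ring, hss]
    have h6 : l1 (restr T υ) * m ≤ B ^ 2 := le_of_mul_le_mul_left (by linarith) hs0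
    linarith
  have htail : l2 (restr Tᶜ υ) ≤ B := le_of_sq_le_sq' (l2_nonneg _) hB0 htail_sq
  -- assemble Goal 3
  have hsplitυ : l2 υ ≤ B + l2 (restr Tᶜ υ) := by
    refine le_of_sq_le_sq' (l2_nonneg _) (add_nonneg hB0 (l2_nonneg _)) ?_
    rw [l2_sq_split T υ]
    nlinarith [mul_nonneg hB0 (l2_nonneg (restr Tᶜ υ))]
  refine ⟨hgoal1, hgoal2, ?_⟩
  calc l2 υ ≤ B + l2 (restr Tᶜ υ) := hsplitυ
    _ ≤ B + B := by linarith
    _ ≤ 2 * (4 * K ^ 2 * lam * Real.sqrt s) := by linarith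
    _ ≤ 12 * K ^ 2 * lam * Real.sqrt s := by
        have hnn : 0 ≤ K ^ 2 * lam * Real.sqrt s := by positivity
        linarith
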